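/- Let A, B ∈ ℝ^{p×p} be symmetric, a, b ∈ ℝ^p, α, β ∈ ℝ, and define g(x) = (1/2)⟨Ax, x⟩ + ⟨a, x⟩ + α, q(x) = (1/2)⟨Bx, x⟩ + ⟨b, x⟩ + β and f = g/q. Take 0 < m < M and K := {x ∈ ℝ^p : m ≤ q(x) ≤ M}, and let x* be the unique minimizer of f over K. Suppose A is positive definite and at least one of the following holds: (a) B = 0; (b) g is nonnegative on K and B is negative semidefinite; (c) g is nonpositive on K and B is positive semidefinite. Then: (1) f is κ-quasar-convex on K with respect to x*, with κ = m/M; (2) f is (κ/2, γ)-strongly quasar-convex on K with respect to x*, where γ = σ_min(A)/m and σ_min(A) is the minimum eigenvalue of A; (3) for every λ ∈ (0,1), f is (λκ, (λ^{−1} − 1)σ_min(A)/(4M))-strongly quasar-convex on K with respect to x*. -/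

import Mathlib

open RealInnerProductSpace

section helpers
open InnerProductSpace
variable {E : Type*} [NormedAddCommGroup E] [InnerProductSpace ℝ E] [CompleteSpace E]

private lemma quadFDeriv' (A : E →L[ℝ] E) (hA : ∀ x y : E, ⟪A x, y⟫ = ⟪x, A y⟫) (a : E) (α : ℝ)
    (x : E) :
    HasFDerivAt (fun y => (1/2 : ℝ) * ⟪A y, y⟫ + ⟪a, y⟫ + α) (toDual ℝ E (A x + a)) x := by
  have h1 : HasFDerivAt (fun y : E => ⟪A y, y⟫)
      ((fderivInnerCLM ℝ (A x, x)).comp ((A : E →L[ℝ] E).prod (ContinuousLinearMap.id ℝ E))) x :=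
    (A.hasFDerivAt).inner ℝ (hasFDerivAt_id x)
  have h2 : HasFDerivAt (fun y : E => ⟪a, y⟫) (innerSL ℝ a : E →L[ℝ] ℝ) x :=
    (innerSL ℝ a).hasFDerivAt
  have h3 := ((h1.const_mul (1/2 : ℝ)).add h2).add_const α
  refine h3.congr_fderiv ?_
  ext z
  simp [fderivInnerCLM_apply, toDual_apply_apply, inner_add_left]
  rw [real_inner_comm z (A x), hA]
  ring

private lemma gradQuot' {g q : E → ℝ} {u v : E} {x : E} (hq : q x ≠ 0)
    (hgd : HasFDerivAt g (toDual ℝ E u) x) (hqd : HasFDerivAt q (toDual ℝ E v) x)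
    (d : E) :
    ⟪gradient (fun y => g y / q y) x, d⟫
      = (q x)⁻¹ * ⟪u, d⟫ - g x * ((q x ^ 2)⁻¹ * ⟪v, d⟫) := by
  have hinv : HasFDerivAt (fun y => (q y)⁻¹) ((-(q x ^ 2)⁻¹) • (toDual ℝ E v)) x :=
    (hasDerivAt_inv hq).comp_hasFDerivAt x hqd
  have hmul : HasFDerivAt (fun y => g y * (q y)⁻¹)
      (g x • ((-(q x ^ 2)⁻¹) • (toDual ℝ E v)) + (q x)⁻¹ • (toDual ℝ E u)) x :=
    hgd.mul hinv
  have hfun : (fun y => g y / q y) = fun y => g y * (q y)⁻¹ := by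
    funext y; rw [div_eq_mul_inv]
  rw [hfun]
  have hgrad := (hasFDerivAt_iff_hasGradientAt.mp hmul).gradient
  rw [hgrad, toDual_symm_apply]
  simp [toDual_apply_apply]
  ring

private lemma endgame' {m M qx qs fx fs T S : ℝ} (hm : 0 < m) (hmM : m < M)
    (hqx1 : m ≤ qx) (hqx2 : qx ≤ M) (hqs1 : m ≤ qs)
    (hS : 0 ≤ S) (hF : fs ≤ fx)
    (hkey : qx * T + S ≤ qs * (fs - fx)) :
    (fx + (1/(m/M)) * T ≤ fs) ∧
    (fx + (1/((m/M)/2)) * T + S/m ≤ fs) ∧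
    (∀ l : ℝ, 0 < l → l < 1 → fx + (1/(l*(m/M))) * T + ((l⁻¹ - 1) * S)/(4*M) ≤ fs) := by
  have hM : 0 < M := hm.trans hmM
  have hqx0 : 0 < qx := lt_of_lt_of_le hm hqx1
  have hqs0 : 0 < qs := lt_of_lt_of_le hm hqs1
  have hN : qx * T + S ≤ 0 := hkey.trans (mul_nonpos_of_nonneg_of_nonpos hqs0.le (by linarith))
  have hT : T ≤ 0 := by nlinarith
  have hMT : M * T + S ≤ 0 := by nlinarith
  have hmaster : fx + (M*T + S)/m ≤ fs := by
    have h1 : M*T + S ≤ m * (fs - fx) := by nlinarith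
    have := (div_le_iff₀ hm).mpr (by linarith : M*T + S ≤ (fs - fx) * m)
    linarith
  refine ⟨?_, ?_, ?_⟩
  · have hco : (1/(m/M)) = M/m := one_div_div m M
    rw [hco]
    have : (M/m)*T ≤ (M*T + S)/m := by
      rw [div_mul_eq_mul_div, div_le_div_iff_of_pos_right hm]; linarith
    linarith
  · have hco : (1/((m/M)/2)) = (M*2)/m := by
      rw [div_div, one_div_div]
    rw [hco]
    have : (M*2/m)*T + S/m ≤ (M*T + S)/m := by
      rw [div_mul_eq_mul_div, ← add_div, div_le_div_iff_of_pos_right hm]; nlinarith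
    linarith
  · intro l hl0 hl1
    set u := l⁻¹ with hu
    have hu1 : 1 < u := (one_lt_inv₀ hl0).mpr hl1
    have hco : (1/(l*(m/M))) = u*M/m := by
      field_simp [hu]
      rw [hu, mul_inv_cancel₀ hl0.ne']
    rw [hco]
    have expand : (M*T+S)/m - ((u*M/m)*T + ((u-1)*S)/(4*M))
        = (4*M*((1-u)*M*T + S) - m*((u-1)*S)) / (4*M*m) := by
      field_simp
      ring
    have hnum : 0 ≤ 4*M*((1-u)*M*T + S) - m*((u-1)*S) := by
      nlinarith [mul_nonneg (mul_nonneg (by linarith : (0:ℝ) ≤ u - 1)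
          (by linarith : (0:ℝ) ≤ -(M*T) - S)) hM.le,
        mul_nonneg (mul_nonneg (by linarith : (0:ℝ) ≤ u - 1) hS)
          (by linarith : (0:ℝ) ≤ 4*M - m),
        mul_nonneg hS hM.le]
    have hpos : 0 ≤ (M*T+S)/m - ((u*M/m)*T + ((u-1)*S)/(4*M)) := by
      rw [expand]; positivity
    linarith

private lemma quadId {qx gx Gd Qd Ad Bd gs qs T : ℝ} (hqx : qx ≠ 0) (hqs : qs ≠ 0)
    (hgs : gs = gx + Gd + (1/2)*Ad) (hqs' : qs = qx + Qd + (1/2)*Bd)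
    (hT : T = qx⁻¹ * Gd - gx * ((qx^2)⁻¹ * Qd)) :
    qs * (gs/qs - gx/qx) = qx * T + (1/2)*Ad - (gx/qx)*((1/2)*Bd) := by
  rw [mul_sub, mul_div_cancel₀ _ hqs, hgs, hqs', hT]
  field_simp
  ring

end helpers

/-- Quadratic fractional functions f = g/q are quasar-convex / strongly quasar-convex
on K = {m ≤ q ≤ M} with explicit parameters: κ = m/M for quasar-convexity,
(κ/2, σ_min(A)/m) for strong quasar-convexity, and (λκ, (λ⁻¹−1)σ_min(A)/(4M)) for
every λ ∈ (0,1).  Here A is represented as a symmetric continuous linear operator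
and σmin is its minimum eigenvalue, characterized as the greatest constant c with
⟨Ax, x⟩ ≥ c‖x‖² for all x. -/
theorem quadratic_fractional_strongly_quasar_convex
    (p : ℕ)
    (A B : EuclideanSpace ℝ (Fin p) →L[ℝ] EuclideanSpace ℝ (Fin p))
    (hAsymm : ∀ x y, ⟪A x, y⟫ = ⟪x, A y⟫) (hBsymm : ∀ x y, ⟪B x, y⟫ = ⟪x, B y⟫)
    (hApos : ∀ x : EuclideanSpace ℝ (Fin p), x ≠ 0 → 0 < ⟪A x, x⟫)
    (a b : EuclideanSpace ℝ (Fin p)) (α β : ℝ)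
    (g q : EuclideanSpace ℝ (Fin p) → ℝ)
    (hg : ∀ x, g x = (1/2) * ⟪A x, x⟫ + ⟪a, x⟫ + α)
    (hq : ∀ x, q x = (1/2) * ⟪B x, x⟫ + ⟪b, x⟫ + β)
    (f : EuclideanSpace ℝ (Fin p) → ℝ) (hf : ∀ x, f x = g x / q x)
    (m M : ℝ) (hm : 0 < m) (hmM : m < M)
    (K : Set (EuclideanSpace ℝ (Fin p)))
    (hK : K = {x : EuclideanSpace ℝ (Fin p) | m ≤ q x ∧ q x ≤ M})
    (σmin : ℝ)
    (hσmin : IsGreatest {c : ℝ | ∀ x : EuclideanSpace ℝ (Fin p),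
      c * ‖x‖^2 ≤ ⟪A x, x⟫} σmin)
    (hcase : B = 0 ∨
      ((∀ x ∈ K, 0 ≤ g x) ∧ ∀ x : EuclideanSpace ℝ (Fin p), ⟪B x, x⟫ ≤ 0) ∨
      ((∀ x ∈ K, g x ≤ 0) ∧ ∀ x : EuclideanSpace ℝ (Fin p), 0 ≤ ⟪B x, x⟫))
    (xstar : EuclideanSpace ℝ (Fin p)) (hxK : xstar ∈ K)
    (hmin : ∀ x ∈ K, f xstar ≤ f x)
    (huniq : ∀ z ∈ K, (∀ x ∈ K, f z ≤ f x) → z = xstar) :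
    (∀ x ∈ K, f x + (1 / (m / M)) * ⟪gradient f x, xstar - x⟫ ≤ f xstar) ∧
    (∀ x ∈ K, f x + (1 / ((m / M) / 2)) * ⟪gradient f x, xstar - x⟫
        + ((σmin / m) / 2) * ‖xstar - x‖^2 ≤ f xstar) ∧
    (∀ l : ℝ, l ∈ Set.Ioo (0:ℝ) 1 → ∀ x ∈ K,
      f x + (1 / (l * (m / M))) * ⟪gradient f x, xstar - x⟫
        + (((l⁻¹ - 1) * σmin / (4 * M)) / 2) * ‖xstar - x‖^2 ≤ f xstar) := by
  have hσ0 : 0 ≤ σmin := by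
    refine hσmin.2 ?_
    intro y
    rcases eq_or_ne y 0 with rfl | hy
    · simp
    · simpa using (hApos y hy).le
  have hxsb : m ≤ q xstar ∧ q xstar ≤ M := by rw [hK] at hxK; exact hxK
  have key : ∀ x ∈ K,
      (f x + (1 / (m / M)) * ⟪gradient f x, xstar - x⟫ ≤ f xstar) ∧
      (f x + (1 / ((m / M) / 2)) * ⟪gradient f x, xstar - x⟫
        + ((σmin / m) / 2) * ‖xstar - x‖^2 ≤ f xstar) ∧
      (∀ l : ℝ, 0 < l → l < 1 →
        f x + (1 / (l * (m / M))) * ⟪gradient f x, xstar - x⟫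
        + (((l⁻¹ - 1) * σmin / (4 * M)) / 2) * ‖xstar - x‖^2 ≤ f xstar) := by
    intro x hx
    have hxb : m ≤ q x ∧ q x ≤ M := by rw [hK] at hx; exact hx
    have hqx0 : q x ≠ 0 := by linarith [hxb.1]
    have hqs0 : q xstar ≠ 0 := by linarith [hxsb.1]
    set d : EuclideanSpace ℝ (Fin p) := xstar - x with hd
    have hxsd : xstar = x + d := by rw [hd]; abel
    -- gradient formula
    have hDg : HasFDerivAt g (InnerProductSpace.toDual ℝ _ (A x + a)) x := by
      rw [funext hg]; exact quadFDeriv' A hAsymm a α x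
    have hDq : HasFDerivAt q (InnerProductSpace.toDual ℝ _ (B x + b)) x := by
      rw [funext hq]; exact quadFDeriv' B hBsymm b β x
    have hT : ⟪gradient f x, d⟫
        = (q x)⁻¹ * ⟪A x + a, d⟫ - g x * ((q x ^ 2)⁻¹ * ⟪B x + b, d⟫) := by
      rw [funext hf]; exact gradQuot' hqx0 hDg hDq d
    -- quadratic expansions
    have hgs : g xstar = g x + ⟪A x + a, d⟫ + (1/2) * ⟪A d, d⟫ := by
      rw [hg, hg, hxsd]
      simp only [map_add, inner_add_left, inner_add_right]
      rw [hAsymm d x, real_inner_comm d (A x)]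
      ring
    have hqs : q xstar = q x + ⟪B x + b, d⟫ + (1/2) * ⟪B d, d⟫ := by
      rw [hq, hq, hxsd]
      simp only [map_add, inner_add_left, inner_add_right]
      rw [hBsymm d x, real_inner_comm d (B x)]
      ring
    -- sign condition
    have hsign : g x * ⟪B d, d⟫ ≤ 0 := by
      rcases hcase with h0 | hb | hc
      · rw [h0]; simp
      · exact mul_nonpos_of_nonneg_of_nonpos (hb.1 x hx) (hb.2 d)
      · exact mul_nonpos_of_nonpos_of_nonneg (hc.1 x hx) (hc.2 d)
    -- key inequality
    have hid : q xstar * (f xstar - f x)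
        = q x * ⟪gradient f x, d⟫ + (1/2) * ⟪A d, d⟫ - (g x / q x) * ((1/2) * ⟪B d, d⟫) := by
      rw [hf, hf]
      exact quadId hqx0 hqs0 hgs hqs hT
    have hAd : σmin * ‖d‖^2 ≤ ⟪A d, d⟫ := hσmin.1 d
    have hkey : q x * ⟪gradient f x, d⟫ + (σmin/2) * ‖d‖^2 ≤ q xstar * (f xstar - f x) := by
      rw [hid]
      have h1 : (g x / q x) * ((1/2) * ⟪B d, d⟫) ≤ 0 := by
        rw [div_mul_eq_mul_div]
        apply div_nonpos_of_nonpos_of_nonneg _ (by linarith [hxb.1])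
        nlinarith
      linarith
    have hS : 0 ≤ (σmin/2) * ‖d‖^2 := by positivity
    have := endgame' hm hmM hxb.1 hxb.2 hxsb.1 hS (hmin x hx) hkey
    refine ⟨this.1, ?_, ?_⟩
    · have h2 := this.2.1
      have heq : ((σmin/2) * ‖d‖^2)/m = ((σmin / m) / 2) * ‖d‖^2 := by ring
      linarith [heq ▸ h2]
    · intro l hl0 hl1
      have h3 := this.2.2 l hl0 hl1
      have heq : ((l⁻¹ - 1) * ((σmin/2) * ‖d‖^2))/(4*M)
          = (((l⁻¹ - 1) * σmin / (4 * M)) / 2) * ‖d‖^2 := by ring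
      linarith [heq ▸ h3]
  exact ⟨fun x hx => (key x hx).1, fun x hx => (key x hx).2.1,
    fun l hl x hx => (key x hx).2.2 l hl.1 hl.2⟩
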